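/- Let A be a p×q matrix with rational entries such that the homogeneous system A(x₁,…,x_q)ᵀ = 0 is partition regular over ℕ, i.e., for every r ∈ ℕ and every partition ℕ = C₁ ∪ … ∪ C_r there exist i ∈ {1,…,r} and x₁,…,x_q ∈ C_i with A(x₁,…,x_q)ᵀ = 0. Then for every C-set F ⊆ ℕ there exist x₁,…,x_q ∈ F with A(x₁,…,x_q)ᵀ = 0. -/

import Mathlib

open Finset
/-- `F ⊆ ℕ₊` is a J-set: for every `m ∈ ℕ` and every sequence `s : ℕ₊ → ℤ^m`
there exist `r ∈ ℕ₊` and a nonempty finite `α ⊆ ℕ₊` such that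
`r + s_α i ∈ F` for every `i ∈ {1,…,m}`, where `s_α = ∑_{n∈α} s n`. -/
def IsJSet (F : Set ℕ+) : Prop :=
  ∀ (m : ℕ) (s : ℕ+ → Fin m → ℤ),
    ∃ (r : ℕ+) (α : Finset ℕ+), α.Nonempty ∧
      ∀ i : Fin m, ∃ k ∈ F, ((k : ℕ) : ℤ) = ((r : ℕ) : ℤ) + ∑ n ∈ α, s n i

/-- An ultrafilter `p` on `ℕ₊` is idempotent: `p + p = p`, where
`A ∈ p + q ↔ {n | {m | n + m ∈ A} ∈ q} ∈ p`. -/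
def IsIdempotentUF (p : Ultrafilter ℕ+) : Prop :=
  ∀ A : Set ℕ+, ({n : ℕ+ | {m : ℕ+ | n + m ∈ A} ∈ p} ∈ p ↔ A ∈ p)

/-- `F ⊆ ℕ₊` is a C-set: there is an idempotent ultrafilter `p` on `ℕ₊` such that
`F ∈ p` and every member of `p` is a J-set. -/
def IsCSet (F : Set ℕ+) : Prop :=
  ∃ p : Ultrafilter ℕ+, IsIdempotentUF p ∧ (∀ A ∈ p, IsJSet A) ∧ F ∈ p

section Base
variable (pU : Ultrafilter ℕ+)

def ufstar (B : Set ℕ+) : Set ℕ+ := {n | n ∈ B ∧ {m | n + m ∈ B} ∈ pU}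

variable {pU}

lemma ufstar_subset (B : Set ℕ+) : ufstar pU B ⊆ B := fun _ h => h.1

lemma ufstar_mem (hid : IsIdempotentUF pU) {B : Set ℕ+} (hB : B ∈ pU) :
    ufstar pU B ∈ pU := by
  have h1 : {n : ℕ+ | {m : ℕ+ | n + m ∈ B} ∈ pU} ∈ pU := (hid B).2 hB
  have := Filter.inter_mem (Ultrafilter.mem_coe.2 hB) (Ultrafilter.mem_coe.2 h1)
  exact Ultrafilter.mem_coe.1 this

lemma ufstar_shift (hid : IsIdempotentUF pU) {B : Set ℕ+} (hB : B ∈ pU) {n : ℕ+}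
    (hn : n ∈ ufstar pU B) : {m | n + m ∈ ufstar pU B} ∈ pU := by
  have hBn : {m | n + m ∈ B} ∈ pU := hn.2
  have hstar : ufstar pU {m | n + m ∈ B} ∈ pU := ufstar_mem hid hBn
  refine Ultrafilter.mem_coe.1 (Filter.mem_of_superset (Ultrafilter.mem_coe.2 hstar) ?_)
  intro m hm
  refine ⟨hm.1, ?_⟩
  have := hm.2
  simpa [Set.mem_setOf_eq, add_assoc] using this

lemma exists_pure_fiber {α : Type*} [Finite α] (u : Ultrafilter α) :
    ∃ a : α, {a} ∈ u := by
  by_contra h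
  push_neg at h
  have hc : ∀ a : α, ({a} : Set α)ᶜ ∈ u := fun a =>
    (Ultrafilter.compl_mem_iff_notMem).2 (h a)
  have : (⋂ a : α, ({a} : Set α)ᶜ) ∈ (u : Filter α) :=
    Filter.iInter_mem.2 fun a => Ultrafilter.mem_coe.2 (hc a)
  have hempty : (⋂ a : α, ({a} : Set α)ᶜ) = ∅ := by
    ext x; simp
  rw [hempty] at this
  exact absurd this (Filter.empty_notMem (u : Filter α))

lemma mult_mem (hid : IsIdempotentUF pU) {c : ℕ} (hc : 0 < c) :
    {n : ℕ+ | c ∣ (n : ℕ)} ∈ pU := by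
  haveI : NeZero c := ⟨hc.ne'⟩
  set φ : ℕ+ → ZMod c := fun n => ((n : ℕ) : ZMod c) with hφ
  obtain ⟨ρ, hρ⟩ := exists_pure_fiber (Ultrafilter.map φ pU)
  have hA : {n : ℕ+ | φ n = ρ} ∈ pU := by
    have := hρ
    rw [Ultrafilter.mem_map] at this
    simpa [Set.preimage, Set.mem_singleton_iff] using this
  have huniq : ∀ σ : ZMod c, {n : ℕ+ | φ n = σ} ∈ pU → σ = ρ := by
    intro σ hσ
    by_contra hne
    have : ({n : ℕ+ | φ n = σ} ∩ {n : ℕ+ | φ n = ρ}) ∈ pU :=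
      Ultrafilter.mem_coe.1 (Filter.inter_mem (Ultrafilter.mem_coe.2 hσ) (Ultrafilter.mem_coe.2 hA))
    have hem : ({n : ℕ+ | φ n = σ} ∩ {n : ℕ+ | φ n = ρ}) = ∅ := by
      ext n; simp only [Set.mem_inter_iff, Set.mem_setOf_eq, Set.mem_empty_iff_false, iff_false]
      rintro ⟨h1, h2⟩; exact hne (h1 ▸ h2 ▸ rfl)
    rw [hem] at this
    exact Filter.empty_notMem _ this
  have hT : {n : ℕ+ | {m : ℕ+ | n + m ∈ {k : ℕ+ | φ k = ρ}} ∈ pU} ∈ pU :=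
    (hid _).2 hA
  refine Ultrafilter.mem_coe.1 (Filter.mem_of_superset (Ultrafilter.mem_coe.2 hT) ?_)
  intro n hn
  simp only [Set.mem_setOf_eq] at hn ⊢
  have hadd : ∀ m : ℕ+, φ (n + m) = φ n + φ m := by
    intro m; simp [hφ, PNat.add_coe, Nat.cast_add]
  have hshift : {m : ℕ+ | φ m = ρ - φ n} ∈ pU := by
    refine Ultrafilter.mem_coe.1 (Filter.mem_of_superset (Ultrafilter.mem_coe.2 hn) ?_)
    intro m hm
    simp only [Set.mem_setOf_eq] at hm ⊢
    rw [hadd m] at hm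
    exact eq_sub_of_add_eq (by rw [add_comm]; exact hm)
  have h0 : ρ - φ n = ρ := huniq _ hshift
  have hφ0 : φ n = 0 := by
    have := sub_eq_self.mp h0
    exact this
  exact (ZMod.natCast_eq_zero_iff _ _).1 hφ0

lemma galvin {ι : Type} (hid : IsIdempotentUF pU)
    {B : Set ℕ+} (hB : B ∈ pU) (J : Finset ι) (val : ι → (ℕ → ℕ+) → ℤ)
    (hyp : ∀ D ∈ pU, ∃ z : ℕ → ℕ+, ∀ j ∈ J, ∃ m ∈ D, ((m : ℕ) : ℤ) = val j z) :
    ∃ Z : ℕ → (ℕ → ℕ+), ∀ (α : Finset ℕ), α.Nonempty → ∀ j ∈ J,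
      ∃ m ∈ B, ((m : ℕ) : ℤ) = ∑ n ∈ α, val j (Z n) := by
  classical
  choose pick hpick using hyp
  set pickT : Set ℕ+ → (ℕ → ℕ+) := fun D => if h : D ∈ pU then pick D h else fun _ => 1 with hpickT
  set Dl : List (ℕ → ℕ+) → Set ℕ+ := fun lst =>
    ufstar pU B ∩ ⋂ t ∈ (↑(J ×ˢ ((Finset.range lst.length).powerset.filter
        (fun α => α.Nonempty))) : Set (ι × Finset ℕ)),
      {w : ℕ+ | ∃ m ∈ ufstar pU B,
        ((m : ℕ) : ℤ) = (∑ k ∈ t.2, val t.1 (lst.getD k (fun _ => 1))) + ((w : ℕ) : ℤ)} with hDl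
  set g : ℕ → List (ℕ → ℕ+) := fun n => Nat.rec [] (fun _ lst => lst ++ [pickT (Dl lst)]) n with hg
  set W : ℕ → (ℕ → ℕ+) := fun n => pickT (Dl (g n)) with hW
  have hgsucc : ∀ n, g (n + 1) = g n ++ [W n] := fun n => rfl
  have hglist : ∀ n, g n = (List.range n).map W := by
    intro n
    induction n with
    | zero => rfl
    | succ n ih => rw [hgsucc, ih, List.range_succ, List.map_append]; rfl
  have hlen : ∀ n, (g n).length = n := by
    intro n; rw [hglist]; simp
  have hgetD : ∀ n k, k < n → (g n).getD k (fun _ => 1) = W k := by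
    intro n k hk
    rw [hglist]
    have hk' : k < ((List.range n).map W).length := by simpa using hk
    rw [List.getD_eq_getElem _ _ hk']
    simp
  -- shift sets are in pU given a realizer
  have hSv : ∀ v : ℤ, (∃ m₀ ∈ ufstar pU B, ((m₀ : ℕ) : ℤ) = v) →
      {w : ℕ+ | ∃ m ∈ ufstar pU B, ((m : ℕ) : ℤ) = v + ((w : ℕ) : ℤ)} ∈ pU := by
    rintro v ⟨m₀, hm₀, hv⟩
    have hsh := ufstar_shift hid hB hm₀
    refine Ultrafilter.mem_coe.1 (Filter.mem_of_superset (Ultrafilter.mem_coe.2 hsh) ?_)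
    intro w hw
    refine ⟨m₀ + w, hw, ?_⟩
    rw [← hv]; push_cast [PNat.add_coe]; ring
  -- invariant
  set Inv : ℕ → Prop := fun n => ∀ α : Finset ℕ, α.Nonempty → α ⊆ Finset.range n →
    ∀ j ∈ J, ∃ m ∈ ufstar pU B, ((m : ℕ) : ℤ) = ∑ k ∈ α, val j (W k) with hInvDef
  have hDmem : ∀ n, Inv n → Dl (g n) ∈ pU := by
    intro n hInv
    rw [hDl]
    refine Ultrafilter.mem_coe.1 (Filter.inter_mem (Ultrafilter.mem_coe.2 (ufstar_mem hid hB)) ?_)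
    refine (Filter.biInter_mem (Finset.finite_toSet _)).2 ?_
    rintro ⟨j, α⟩ ht
    rw [Finset.mem_coe, Finset.mem_product, Finset.mem_filter, Finset.mem_powerset] at ht
    have hjJ := ht.1
    have hαsub := ht.2.1
    have hαne := ht.2.2
    rw [hlen n] at hαsub
    have hsum : (∑ k ∈ α, val j ((g n).getD k (fun _ => 1))) = ∑ k ∈ α, val j (W k) := by
      refine Finset.sum_congr rfl fun k hk => ?_
      rw [hgetD n k (Finset.mem_range.1 (hαsub hk))]
    rw [hsum]
    exact Ultrafilter.mem_coe.2 (hSv _ (hInv α hαne hαsub j hjJ))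
  have hWprop : ∀ n, Dl (g n) ∈ pU → ∀ j ∈ J, ∃ m ∈ Dl (g n), ((m : ℕ) : ℤ) = val j (W n) := by
    intro n h j hj
    have hwn : W n = pick (Dl (g n)) h := by
      rw [hW]; simp only [hpickT, dif_pos h]
    rw [hwn]
    exact hpick (Dl (g n)) h j hj
  have hInvAll : ∀ n, Inv n := by
    intro n
    induction n using Nat.strong_induction_on with
    | _ n ih =>
      intro α hne hsub j hj
      set nm := α.max' hne with hnm
      have hnmα : nm ∈ α := α.max'_mem hne
      have hnmlt : nm < n := Finset.mem_range.1 (hsub hnmα)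
      have hInvnm : Inv nm := ih nm hnmlt
      have hD : Dl (g nm) ∈ pU := hDmem nm hInvnm
      obtain ⟨m₁, hm₁D, hm₁v⟩ := hWprop nm hD j hj
      have hm₁star : m₁ ∈ ufstar pU B := hm₁D.1
      set α' := α.erase nm with hα'
      have hα'sub : α' ⊆ Finset.range nm := by
        intro k hk
        rw [Finset.mem_range]
        have hkα : k ∈ α := Finset.mem_of_mem_erase hk
        have hkne : k ≠ nm := Finset.ne_of_mem_erase hk
        exact lt_of_le_of_ne (α.le_max' k hkα) hkne
      have hαins : α = insert nm α' := (Finset.insert_erase hnmα).symm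
      by_cases hα'ne : α'.Nonempty
      · obtain ⟨m₂, hm₂, hv₂⟩ := hInvnm α' hα'ne hα'sub j hj
        have hm₁Sv : m₁ ∈ {w : ℕ+ | ∃ m ∈ ufstar pU B,
            ((m : ℕ) : ℤ) = (∑ k ∈ α', val j ((g nm).getD k (fun _ => 1))) + ((w : ℕ) : ℤ)} := by
          have := hm₁D.2
          refine Set.mem_iInter₂.1 this (j, α') ?_
          rw [Finset.mem_coe, Finset.mem_product, Finset.mem_filter, Finset.mem_powerset, hlen]
          exact ⟨hj, hα'sub, hα'ne⟩
        obtain ⟨m₃, hm₃, hv₃⟩ := hm₁Sv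
        refine ⟨m₃, hm₃, ?_⟩
        have hsum : (∑ k ∈ α', val j ((g nm).getD k (fun _ => 1))) = ∑ k ∈ α', val j (W k) := by
          refine Finset.sum_congr rfl fun k hk => ?_
          rw [hgetD nm k (Finset.mem_range.1 (hα'sub hk))]
        rw [hv₃, hsum, hm₁v, hαins, Finset.sum_insert (Finset.notMem_erase nm α)]
        ring
      · have hαsingle : α = {nm} := by
          rw [hαins, Finset.not_nonempty_iff_eq_empty.1 hα'ne]; rfl
        refine ⟨m₁, hm₁star, ?_⟩
        rw [hαsingle, Finset.sum_singleton, hm₁v]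
  refine ⟨W, fun α hne j hj => ?_⟩
  obtain ⟨m, hm, hv⟩ := hInvAll (α.max' hne + 1) α hne
    (fun k hk => Finset.mem_range.2 (Nat.lt_succ_of_le (α.le_max' k hk))) j hj
  exact ⟨m, ufstar_subset B hm, hv⟩

theorem firstEntries {qq : ℕ} (hid : IsIdempotentUF pU) (hJset : ∀ A ∈ pU, IsJSet A)
    (L : Finset ℕ) :
    ∀ (J : Finset (Fin qq)) (lead : Fin qq → ℕ) (a : ℕ → ℤ) (b : Fin qq → ℕ → ℤ),
    (∀ l ∈ L, 0 < a l) → (∀ j ∈ J, lead j ∈ L) →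
    (∀ j ∈ J, ∀ l, l ≤ lead j → b j l = 0) →
    ∀ B ∈ pU, ∃ z : ℕ → ℕ+, ∀ j ∈ J, ∃ m ∈ B,
      ((m : ℕ) : ℤ) = a (lead j) * ((z (lead j) : ℕ) : ℤ) +
        ∑ l ∈ L, b j l * ((z l : ℕ) : ℤ) := by
  classical
  induction L using Finset.strongInduction with
  | _ L ih =>
  intro J lead a b ha hlead hb0 B hB
  rcases L.eq_empty_or_nonempty with hLe | hLne
  · exact ⟨fun _ => 1, fun j hj => absurd (hlead j hj) (by rw [hLe]; exact Finset.notMem_empty _)⟩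
  set l₀ := L.min' hLne with hl₀
  have hl₀L : l₀ ∈ L := L.min'_mem hLne
  set L' := L.erase l₀ with hL'
  have hssub : L' ⊂ L := Finset.erase_ssubset hl₀L
  set J' := J.filter (fun j => lead j ≠ l₀) with hJ'
  set J₀ := J.filter (fun j => lead j = l₀) with hJ₀
  set val : Fin qq → (ℕ → ℕ+) → ℤ := fun j z =>
    a (lead j) * ((z (lead j) : ℕ) : ℤ) + ∑ l ∈ L', b j l * ((z l : ℕ) : ℤ) with hval
  -- induction hypothesis, fed into galvin
  have hIH : ∀ D ∈ pU, ∃ z : ℕ → ℕ+, ∀ j ∈ J', ∃ m ∈ D, ((m : ℕ) : ℤ) = val j z := by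
    intro D hD
    refine ih L' hssub J' lead a b (fun l hl => ha l (Finset.mem_of_mem_erase hl))
      (fun j hj => ?_) (fun j hj l hl => hb0 j (Finset.mem_filter.1 hj).1 l hl) D hD
    have hjJ := (Finset.mem_filter.1 hj).1
    have hne := (Finset.mem_filter.1 hj).2
    exact Finset.mem_erase.2 ⟨hne, hlead j hjJ⟩
  obtain ⟨Z, hZ⟩ := galvin hid hB J' val hIH
  -- the J-set application
  set c := (a l₀).toNat with hc
  have hcpos : 0 < c := by
    have := ha l₀ hl₀L; omega
  have hceq : (c : ℤ) = a l₀ := Int.toNat_of_nonneg (le_of_lt (ha l₀ hl₀L))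
  set B' := ufstar pU B ∩ {n : ℕ+ | c ∣ (n : ℕ)} with hB'
  have hB'mem : B' ∈ pU := Ultrafilter.mem_coe.1
    (Filter.inter_mem (Ultrafilter.mem_coe.2 (ufstar_mem hid hB))
      (Ultrafilter.mem_coe.2 (mult_mem hid hcpos)))
  set eJ := J₀.equivFin with heJ
  set s : ℕ+ → Fin (J₀.card + 1) → ℤ := fun n i =>
    if h : (i : ℕ) < J₀.card then
      ∑ l ∈ L', b (eJ.symm ⟨(i : ℕ), h⟩ : Fin qq) l * ((Z n.natPred l : ℕ) : ℤ)
    else 0 with hs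
  obtain ⟨r, α, hαne, hJv⟩ := hJset B' hB'mem (J₀.card + 1) s
  set αN := α.image PNat.natPred with hαN
  have hinj : Set.InjOn PNat.natPred ↑α := fun x _ y _ h => by
    have : x.natPred + 1 = y.natPred + 1 := by rw [h]
    rw [PNat.natPred_add_one, PNat.natPred_add_one] at this
    exact PNat.coe_inj.1 this
  have hαNne : αN.Nonempty := hαne.image _
  -- the dummy coordinate gives divisibility of r
  have hrB' : r ∈ B' := by
    obtain ⟨k₀, hk₀, hv₀⟩ := hJv (Fin.last _)
    have hz : ∀ n ∈ α, s n (Fin.last _) = 0 := by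
      intro n _
      rw [hs]
      simp
    have : ((k₀ : ℕ) : ℤ) = ((r : ℕ) : ℤ) := by
      rw [hv₀, Finset.sum_congr rfl hz]; simp
    have : (k₀ : ℕ) = (r : ℕ) := by exact_mod_cast this
    rwa [← PNat.coe_inj.1 this]
  have hcr : c ∣ (r : ℕ) := hrB'.2
  set z₀ : ℕ+ := ⟨(r : ℕ) / c, Nat.div_pos (Nat.le_of_dvd r.2 hcr) hcpos⟩ with hz₀
  set zf : ℕ → ℕ+ := fun l =>
    if l = l₀ then z₀ else ⟨∑ k ∈ αN, (Z k l : ℕ), by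
      refine Finset.sum_pos (fun k _ => (Z k l).2) hαNne⟩ with hzf
  have hzfl₀ : a l₀ * ((zf l₀ : ℕ) : ℤ) = ((r : ℕ) : ℤ) := by
    have h1 : zf l₀ = z₀ := by rw [hzf]; simp
    rw [h1, ← hceq]
    show (c : ℤ) * ((((r : ℕ) / c : ℕ)) : ℤ) = ((r : ℕ) : ℤ)
    have h2 : c * ((r : ℕ) / c) = (r : ℕ) := Nat.mul_div_cancel' hcr
    exact_mod_cast congrArg (Nat.cast : ℕ → ℤ) h2
  have hzfl : ∀ l ∈ L', ((zf l : ℕ) : ℤ) = ∑ k ∈ αN, ((Z k l : ℕ) : ℤ) := by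
    intro l hl
    have hne : l ≠ l₀ := (Finset.mem_erase.1 hl).1
    rw [hzf]
    simp only [if_neg hne]
    have hzl : zf l = ⟨∑ k ∈ αN, (Z k l : ℕ), Finset.sum_pos (fun k _ => (Z k l).2) hαNne⟩ :=
      if_neg hne
    show ((zf l : ℕ) : ℤ) = _
    rw [hzl]
    show ((∑ k ∈ αN, (Z k l : ℕ) : ℕ) : ℤ) = ∑ k ∈ αN, ((Z k l : ℕ) : ℤ)
    exact Nat.cast_sum _ _
  refine ⟨zf, fun j hj => ?_⟩
  have hLsum : ∀ (f : ℕ → ℤ), b j l₀ = 0 →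
      (∑ l ∈ L, b j l * f l) = ∑ l ∈ L', b j l * f l := by
    intro f h0
    rw [hL']
    exact (Finset.sum_erase L (by rw [h0, zero_mul] : b j l₀ * f l₀ = 0)).symm
  have hbl₀ : b j l₀ = 0 := hb0 j hj l₀ (L.min'_le (lead j) (hlead j hj))
  by_cases hlj : lead j = l₀
  · -- leading row: use the J-set output
    have hjJ₀ : j ∈ J₀ := Finset.mem_filter.2 ⟨hj, hlj⟩
    set i : Fin (J₀.card + 1) := (eJ ⟨j, hjJ₀⟩).castSucc with hi
    have hilt : (i : ℕ) < J₀.card := by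
      rw [hi, Fin.coe_castSucc]; exact (eJ ⟨j, hjJ₀⟩).isLt
    have hsval : ∀ n : ℕ+, s n i = ∑ l ∈ L', b j l * ((Z n.natPred l : ℕ) : ℤ) := by
      intro n
      rw [hs]
      simp only [dif_pos hilt]
      congr 1
      have : (⟨(i : ℕ), hilt⟩ : Fin J₀.card) = eJ ⟨j, hjJ₀⟩ := Fin.ext rfl
      rw [this, Equiv.symm_apply_apply]
    obtain ⟨k, hkB', hkv⟩ := hJv i
    refine ⟨k, (ufstar_subset B) hkB'.1, ?_⟩
    rw [hkv, hlj, hzfl₀, hLsum _ hbl₀]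
    congr 1
    have hsum1 : (∑ n ∈ α, s n i) = ∑ k' ∈ αN, ∑ l ∈ L', b j l * ((Z k' l : ℕ) : ℤ) := by
      rw [hαN, Finset.sum_image (fun x hx y hy h => hinj hx hy h)]
      exact Finset.sum_congr rfl fun n _ => hsval n
    rw [hsum1, Finset.sum_comm]
    refine Finset.sum_congr rfl fun l hl => ?_
    rw [hzfl l hl, Finset.mul_sum]
  · -- non-leading row: use the galvin output
    have hjJ' : j ∈ J' := Finset.mem_filter.2 ⟨hj, hlj⟩
    obtain ⟨m, hmB, hmv⟩ := hZ αN hαNne j hjJ'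
    refine ⟨m, hmB, ?_⟩
    rw [hmv, hLsum _ hbl₀]
    have hleadL' : lead j ∈ L' := Finset.mem_erase.2 ⟨hlj, hlead j hj⟩
    rw [hval]
    simp only
    rw [Finset.sum_add_distrib, ← Finset.mul_sum, ← hzfl _ hleadL']
    congr 1
    rw [Finset.sum_comm]
    refine Finset.sum_congr rfl fun l hl => ?_
    rw [hzfl l hl, Finset.mul_sum]

end Base

lemma ratMulD (x : ℚ) (D : ℕ) (h : x.den ∣ D) : ∃ c : ℤ, (c : ℚ) = x * D := by
  refine ⟨x.num * ((D / x.den : ℕ) : ℤ), ?_⟩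
  obtain ⟨k, hk⟩ := h
  subst hk
  rw [Nat.mul_div_cancel_left k x.den_pos]
  push_cast
  rw [show x * ((x.den : ℚ) * k) = (x * (x.den : ℚ)) * k by ring, Rat.mul_den_eq_num]

lemma dualSep {m : ℕ} (V : Submodule ℚ (Fin m → ℚ)) (x : Fin m → ℚ) (hx : x ∉ V) :
    ∃ w : (Fin m → ℚ) →ₗ[ℚ] ℚ, (∀ v ∈ V, w v = 0) ∧ w x = 1 := by
  have hq : V.mkQ x ≠ 0 := by
    simpa [Submodule.Quotient.mk_eq_zero] using hx
  have h2 : ¬ (∀ f : Module.Dual ℚ ((Fin m → ℚ) ⧸ V), f (V.mkQ x) = 0) := by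
    rw [Module.forall_dual_apply_eq_zero_iff]; exact hq
  push_neg at h2
  obtain ⟨f, hf⟩ := h2
  refine ⟨(f (V.mkQ x))⁻¹ • (f.comp V.mkQ), fun v hv => ?_, ?_⟩
  · simp [Submodule.mkQ_apply, (Submodule.Quotient.mk_eq_zero V).2 hv]
  · exact inv_mul_cancel₀ (by simpa using hf)

def digitP (P : ℕ) (n : ℕ+) : ℕ := ((n : ℕ) / P ^ ((n : ℕ).factorization P)) % P

theorem radoCC (p q : ℕ) (A : Matrix (Fin p) (Fin q) ℚ) (hq : 0 < q)
    (hpr : ∀ (r : ℕ) (C : Fin r → Set ℕ+), (⋃ i, C i) = Set.univ →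
      ∃ (i : Fin r) (x : Fin q → ℕ+), (∀ j, x j ∈ C i) ∧
        A.mulVec (fun j => ((x j : ℕ) : ℚ)) = 0) :
    ∃ (e : Fin q → ℕ) (β : ℕ → Fin q → ℚ),
      (∀ l j, β l j ≠ 0 → e j < l) ∧
      (∀ l ∈ Finset.image e Finset.univ,
        (∑ j ∈ Finset.univ.filter (fun j => e j = l), (fun i => A i j))
          = ∑ j, β l j • (fun i => A i j)) := by
  classical
  -- per-prime monochromatic solutions
  have hsolex : ∀ P : ℕ, P.Prime → ∃ (d : ℕ) (x : Fin q → ℕ+),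
      0 < d ∧ d < P ∧ (∀ j, digitP P (x j) = d) ∧
      A.mulVec (fun j => ((x j : ℕ) : ℚ)) = 0 := by
    intro P hP
    obtain ⟨i, x, hx, hsol⟩ := hpr P (fun i => {n : ℕ+ | digitP P n = (i : ℕ)}) (by
      ext n
      simp only [Set.mem_iUnion, Set.mem_setOf_eq, Set.mem_univ, iff_true]
      exact ⟨⟨digitP P n, Nat.mod_lt _ hP.pos⟩, rfl⟩)
    refine ⟨(i : ℕ), x, ?_, i.isLt, fun j => hx j, hsol⟩
    have h0 : digitP P (x ⟨0, hq⟩) = (i : ℕ) := hx ⟨0, hq⟩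
    rw [← h0]
    have hnd : ¬ P ∣ ((x ⟨0, hq⟩ : ℕ) / P ^ ((x ⟨0, hq⟩ : ℕ)).factorization P) :=
      Nat.not_dvd_ordCompl hP (x ⟨0, hq⟩).ne_zero
    rcases Nat.eq_zero_or_pos (digitP P (x ⟨0, hq⟩)) with h | h
    · exact absurd (Nat.dvd_of_mod_eq_zero h) hnd
    · exact h
  choose dd xx hd0 hdP hdig hsolv using hsolex
  set xT : ℕ → Fin q → ℕ+ := fun P => if h : P.Prime then xx P h else fun _ => 1 with hxT
  set eP : ℕ → Fin q → ℕ := fun P j => ((xT P j : ℕ)).factorization P with heP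
  set pat : ℕ → (Fin q → Fin q → Bool) := fun P j k => decide (eP P j ≤ eP P k) with hpat
  -- pigeonhole on patterns
  have hfib : ∃ R : Fin q → Fin q → Bool, {P | P.Prime ∧ pat P = R}.Infinite := by
    by_contra h
    push_neg at h
    have hsub : {P | P.Prime} ⊆ ⋃ R : Fin q → Fin q → Bool, {P | P.Prime ∧ pat P = R} := by
      intro P hP
      exact Set.mem_iUnion.2 ⟨pat P, hP, rfl⟩
    exact Nat.infinite_setOf_prime ((Set.finite_iUnion h).subset hsub)
  obtain ⟨R, hR⟩ := hfib
  set GoodP := {P | P.Prime ∧ pat P = R} with hGoodP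
  have hbig : ∀ N : ℕ, ∃ P ∈ GoodP, N < P := by
    intro N
    by_contra h
    push_neg at h
    exact hR ((Set.finite_Icc 0 N).subset (fun P hP => Set.mem_Icc.2 ⟨Nat.zero_le _, h P hP⟩))
  obtain ⟨P₀, hP₀G, -⟩ := hbig 0
  set e : Fin q → ℕ := eP P₀ with he
  have hcmp : ∀ P ∈ GoodP, ∀ j k, (eP P j ≤ eP P k ↔ e j ≤ e k) := by
    intro P hPG j k
    have h1 := congrFun (congrFun (hPG.2.trans hP₀G.2.symm) j) k
    exact decide_eq_decide.1 h1
  -- the key mod-P lemma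
  have key : ∀ l ∈ Finset.image e Finset.univ, ∀ w : (Fin p → ℚ) →ₗ[ℚ] ℚ,
      (∀ j, e j < l → w (fun i => A i j) = 0) →
      w (∑ j ∈ Finset.univ.filter (fun j => e j = l), (fun i => A i j)) = 1 → False := by
    intro l hlL w hw0 hw1
    set col : Fin q → (Fin p → ℚ) := fun j i => A i j with hcol
    set D : ℕ := ∏ j, (w (col j)).den with hD
    have hDpos : 0 < D := Finset.prod_pos (fun j _ => (w (col j)).den_pos)
    have hden : ∀ j, ∃ c : ℤ, (c : ℚ) = w (col j) * D :=
      fun j => ratMulD _ _ (Finset.dvd_prod_of_mem _ (Finset.mem_univ j))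
    choose Wc hWc using hden
    obtain ⟨P, hPG, hPD⟩ := hbig D
    have hP : P.Prime := hPG.1
    obtain ⟨j₀, -, hj₀⟩ := Finset.mem_image.1 hlL
    set m := eP P j₀ with hm
    -- the solution at prime P
    set x : Fin q → ℕ+ := xT P with hx
    have hxP : x = xx P hP := by rw [hx, hxT]; simp [dif_pos hP]
    set d : ℕ := dd P hP with hd
    have hdig' : ∀ j, digitP P (x j) = d := by rw [hxP]; exact hdig P hP
    have hd0' : 0 < d := hd0 P hP
    have hdP' : d < P := hdP P hP
    have hsol' : A.mulVec (fun j => ((x j : ℕ) : ℚ)) = 0 := by rw [hxP]; exact hsolv P hP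
    -- decomposition
    set y : Fin q → ℕ := fun j => ((x j : ℕ) / P ^ eP P j) / P with hy
    have hdecomp : ∀ j, (x j : ℕ) = P ^ eP P j * (d + P * y j) := by
      intro j
      have h1 : P ^ eP P j * ((x j : ℕ) / P ^ eP P j) = (x j : ℕ) := by
        rw [heP]
        exact Nat.ordProj_mul_ordCompl_eq_self _ _
      have h2 : (x j : ℕ) / P ^ eP P j = d + P * y j := by
        rw [← hdig' j, hy]
        exact (Nat.mod_add_div _ P).symm
      rw [← h1, h2]
    -- exponents
    have heq : ∀ j, e j = l → eP P j = m := by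
      intro j hj
      have h1 : e j ≤ e j₀ := le_of_eq (hj.trans hj₀.symm)
      have h2 : e j₀ ≤ e j := le_of_eq (hj₀.trans hj.symm)
      exact le_antisymm ((hcmp P hPG j j₀).2 h1) ((hcmp P hPG j₀ j).2 h2)
    have hge : ∀ j, l ≤ e j → m ≤ eP P j := by
      intro j hj
      exact (hcmp P hPG j₀ j).2 (hj₀ ▸ hj)
    have hgt : ∀ j, l < e j → m < eP P j := by
      intro j hj
      rcases lt_or_ge m (eP P j) with h | h
      · exact h
      · exfalso
        have := (hcmp P hPG j j₀).1 (h.trans (le_refl m))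
        omega
    -- the rational equation
    have hweq : (∑ j, w (col j) * ((x j : ℕ) : ℚ)) = 0 := by
      have hmv : A.mulVec (fun j => ((x j : ℕ) : ℚ)) = ∑ j, ((x j : ℕ) : ℚ) • col j := by
        ext i
        simp only [Matrix.mulVec, dotProduct, Finset.sum_apply, Pi.smul_apply,
          smul_eq_mul, hcol]
        exact Finset.sum_congr rfl fun j _ => mul_comm _ _
      have h5 := congrArg w hmv
      rw [hsol', map_zero, map_sum] at h5
      simp only [map_smul, smul_eq_mul] at h5
      calc (∑ j, w (col j) * ((x j : ℕ) : ℚ))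
          = ∑ j, ((x j : ℕ) : ℚ) * w (col j) :=
            Finset.sum_congr rfl (fun j _ => mul_comm _ _)
        _ = 0 := h5.symm
    -- integer version
    set s : Finset (Fin q) := Finset.univ.filter (fun j => l ≤ e j) with hsdef
    set t : Fin q → ℤ := fun j => Wc j * (P : ℤ) ^ (eP P j - m) * ((d : ℤ) + P * y j) with ht
    have hσ : (∑ j ∈ s, t j) = 0 := by
      have hcast : ((∑ j ∈ s, t j : ℤ) : ℚ) * (P : ℚ) ^ m = (∑ j, w (col j) * ((x j : ℕ) : ℚ)) * D := by
        rw [Finset.sum_mul]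
        push_cast
        rw [Finset.sum_mul]
        rw [Finset.sum_filter]
        refine Finset.sum_congr rfl fun j _ => ?_
        by_cases hjl : l ≤ e j
        · simp only [if_pos hjl]
          have hWj := hWc j
          have hxj : ((x j : ℕ) : ℚ) = (P : ℚ) ^ eP P j * ((d : ℚ) + P * y j) := by
            exact_mod_cast congrArg (Nat.cast : ℕ → ℚ) (hdecomp j)
          rw [hxj, ht]
          push_cast [hWj]
          have hpow : (P : ℚ) ^ (eP P j - m) * (P : ℚ) ^ m = (P : ℚ) ^ (eP P j) := by
            rw [← pow_add, Nat.sub_add_cancel (hge j hjl)]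
          linear_combination (w (col j) * ((d : ℚ) + P * y j) * D) * hpow
        · simp only [if_neg hjl]
          push_neg at hjl
          rw [hw0 j hjl]
          ring
      rw [hweq, zero_mul] at hcast
      have hPne : ((P : ℚ)) ^ m ≠ 0 := pow_ne_zero _ (by exact_mod_cast hP.pos.ne')
      have : ((∑ j ∈ s, t j : ℤ) : ℚ) = 0 := by
        rcases mul_eq_zero.1 hcast with h | h
        · exact h
        · exact absurd h hPne
      exact_mod_cast this
    -- Σ₀ = D
    have hSig : (∑ j ∈ Finset.univ.filter (fun j => e j = l), Wc j) = (D : ℤ) := by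
      have : ((∑ j ∈ Finset.univ.filter (fun j => e j = l), Wc j : ℤ) : ℚ) = (D : ℚ) := by
        push_cast
        have : ∀ j ∈ Finset.univ.filter (fun j => e j = l), (Wc j : ℚ) = w (col j) * D :=
          fun j _ => hWc j
        rw [Finset.sum_congr rfl this, ← Finset.sum_mul, ← map_sum]
        rw [hw1, one_mul]
      exact_mod_cast this
    -- divisibility
    have hdvd : (P : ℤ) ∣ (d : ℤ) * D := by
      have hsplit : (∑ j ∈ s, t j) - (∑ j ∈ s, (if e j = l then (d : ℤ) * Wc j else 0)) =
          ∑ j ∈ s, (t j - (if e j = l then (d : ℤ) * Wc j else 0)) := by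
        rw [Finset.sum_sub_distrib]
      have hdvd1 : (P : ℤ) ∣ ∑ j ∈ s, (t j - (if e j = l then (d : ℤ) * Wc j else 0)) := by
        refine Finset.dvd_sum fun j hj => ?_
        have hjl : l ≤ e j := (Finset.mem_filter.1 hj).2
        by_cases hje : e j = l
        · simp only [if_pos hje]
          have h7 : t j - (d : ℤ) * Wc j = P * (Wc j * y j) := by
            simp only [ht]
            rw [heq j hje, Nat.sub_self, pow_zero]
            push_cast
            ring
          exact ⟨Wc j * y j, h7⟩
        · simp only [if_neg hje, sub_zero, ht]
          have hlt : l < e j := lt_of_le_of_ne hjl (fun hh => hje hh.symm)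
          have hmlt : m < eP P j := hgt j hlt
          have hdp : (P : ℤ) ∣ (P : ℤ) ^ (eP P j - m) :=
            dvd_pow_self (P : ℤ) (Nat.sub_ne_zero_of_lt hmlt)
          exact dvd_mul_of_dvd_left (dvd_mul_of_dvd_right hdp _) _
      have hite : (∑ j ∈ s, (if e j = l then (d : ℤ) * Wc j else 0)) = (d : ℤ) * D := by
        rw [← Finset.sum_filter]
        have hsf : s.filter (fun j => e j = l) = Finset.univ.filter (fun j => e j = l) := by
          ext j
          simp only [hsdef, Finset.mem_filter, Finset.mem_univ, true_and]
          exact ⟨fun hh => hh.2, fun hh => ⟨le_of_eq hh.symm, hh⟩⟩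
        rw [hsf, ← Finset.mul_sum, hSig]
      have hfin : (P : ℤ) ∣ (0 : ℤ) - (d : ℤ) * D := by
        rw [← hσ, ← hite, hsplit]
        exact hdvd1
      rw [zero_sub] at hfin
      exact (dvd_neg).1 hfin
    -- contradiction
    have hdvdN : P ∣ d * D := by exact_mod_cast hdvd
    rcases (Nat.Prime.dvd_mul hP).1 hdvdN with h | h
    · exact absurd (Nat.le_of_dvd hd0' h) (not_le.2 hdP')
    · exact absurd (Nat.le_of_dvd hDpos h) (not_le.2 hPD)
  -- derive the columns condition
  set col : Fin q → (Fin p → ℚ) := fun j i => A i j with hcol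
  have hspan : ∀ l ∈ Finset.image e Finset.univ,
      (∑ j ∈ Finset.univ.filter (fun j => e j = l), col j) ∈
        Submodule.span ℚ (col '' {j | e j < l}) := by
    intro l hl
    by_contra hnot
    obtain ⟨w, hw0, hw1⟩ := dualSep _ _ hnot
    exact key l hl w (fun j hj => hw0 _ (Submodule.subset_span ⟨j, hj, rfl⟩)) hw1
  have hcoef : ∀ l ∈ Finset.image e Finset.univ, ∃ c : {j : Fin q // e j < l} → ℚ,
      (∑ i : {j : Fin q // e j < l}, c i • col i.1) =
        ∑ j ∈ Finset.univ.filter (fun j => e j = l), col j := by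
    intro l hl
    have h1 := hspan l hl
    rw [Set.image_eq_range] at h1
    exact (Submodule.mem_span_range_iff_exists_fun ℚ).1 h1
  set β : ℕ → Fin q → ℚ := fun l j =>
    if hl : l ∈ Finset.image e Finset.univ then
      (if hj : e j < l then (hcoef l hl).choose ⟨j, hj⟩ else 0) else 0 with hβ
  refine ⟨e, β, ?_, ?_⟩
  · intro l j hne
    rw [hβ] at hne
    by_contra hjl
    simp only [dif_neg hjl] at hne
    rcases Classical.em (l ∈ Finset.image e Finset.univ) with h | h
    · rw [dif_pos h] at hne; exact hne rfl
    · rw [dif_neg h] at hne; exact hne rfl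
  · intro l hl
    have hspec := (hcoef l hl).choose_spec
    have h2 : (∑ j, β l j • col j) =
        ∑ j ∈ Finset.univ.filter (fun j => e j < l), β l j • col j := by
      refine (Finset.sum_filter_of_ne fun j _ hne => ?_).symm
      by_contra hjl
      apply hne
      rw [hβ]
      simp only [dif_pos hl, dif_neg hjl, zero_smul]
    have h3 : (∑ j ∈ Finset.univ.filter (fun j => e j < l), β l j • col j) =
        ∑ i : {j : Fin q // e j < l}, β l i.1 • col i.1 := by
      refine Finset.sum_subtype _ (fun j => ?_) (fun j => β l j • col j)
      simp
    have h4 : (∑ i : {j : Fin q // e j < l}, β l i.1 • col i.1) =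
        ∑ i : {j : Fin q // e j < l}, (hcoef l hl).choose i • col i.1 := by
      refine Finset.sum_congr rfl fun i _ => ?_
      rw [hβ]
      simp only [dif_pos hl, dif_pos i.2]
    rw [← hspec, ← h4, ← h3, ← h2]

/-- Rado systems are solvable in C-sets: if the homogeneous system `A x = 0`
(`A` a `p × q` matrix over `ℚ`) is partition regular over `ℕ₊`, then for every
C-set `F` it has a solution with all components in `F`. -/
theorem rado_solvable_in_csets (p q : ℕ) (A : Matrix (Fin p) (Fin q) ℚ)
    (hpr : ∀ (r : ℕ) (C : Fin r → Set ℕ+), (⋃ i, C i) = Set.univ →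
      ∃ (i : Fin r) (x : Fin q → ℕ+), (∀ j, x j ∈ C i) ∧
        A.mulVec (fun j => ((x j : ℕ) : ℚ)) = 0)
    (F : Set ℕ+) (hF : IsCSet F) :
    ∃ x : Fin q → ℕ+, (∀ j, x j ∈ F) ∧ A.mulVec (fun j => ((x j : ℕ) : ℚ)) = 0 := by
  classical
  obtain ⟨pU, hid, hJset, hFp⟩ := hF
  rcases Nat.eq_zero_or_pos q with hq0 | hq
  · subst hq0
    refine ⟨Fin.elim0, fun j => j.elim0, ?_⟩
    ext i
    simp [Matrix.mulVec, dotProduct]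
  obtain ⟨e, β, hsupp, hspanEq⟩ := radoCC p q A hq hpr
  set L : Finset ℕ := Finset.image e Finset.univ with hL
  set D : ℕ := ∏ l ∈ L, ∏ j, (β l j).den with hD
  have hDpos : 0 < D := Finset.prod_pos fun l _ => Finset.prod_pos fun j _ => (β l j).den_pos
  have hNum : ∀ l ∈ L, ∀ j, ∃ c : ℤ, (c : ℚ) = β l j * D := by
    intro l hl j
    have h1 : (β l j).den ∣ ∏ j', (β l j').den :=
      Finset.dvd_prod_of_mem (fun j' => (β l j').den) (Finset.mem_univ j)
    have h2 : (∏ j', (β l j').den) ∣ D :=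
      Finset.dvd_prod_of_mem (fun l' => ∏ j', (β l' j').den) hl
    exact ratMulD _ _ (h1.trans h2)
  set Nc : ℕ → Fin q → ℤ := fun l j =>
    if hl : l ∈ L then (hNum l hl j).choose else 0 with hNc
  have hNcv : ∀ l ∈ L, ∀ j, ((Nc l j : ℤ) : ℚ) = β l j * D := by
    intro l hl j
    rw [hNc]
    simp only [dif_pos hl]
    exact (hNum l hl j).choose_spec
  set a : ℕ → ℤ := fun l => (D : ℤ) ^ (l + 1) with ha
  set b : Fin q → ℕ → ℤ := fun j l => - Nc l j * (D : ℤ) ^ l with hb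
  have hbv : ∀ l ∈ L, ∀ j, ((b j l : ℤ) : ℚ) = - β l j * (D : ℚ) ^ (l + 1) := by
    intro l hl j
    simp only [hb]
    push_cast [hNcv l hl j]
    ring
  have hb0 : ∀ j, ∀ l, l ≤ e j → b j l = 0 := by
    intro j l hl
    have hβ0 : β l j = 0 := by
      by_contra hne
      exact absurd (hsupp l j hne) (not_lt.2 hl)
    have hN0 : Nc l j = 0 := by
      rcases Classical.em (l ∈ L) with h | h
      · have h9 := hNcv l h j
        rw [hβ0, zero_mul] at h9
        exact_mod_cast h9
      · rw [hNc]; simp only [dif_neg h]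
    simp only [hb, hN0]
    ring
  obtain ⟨z, hz⟩ := firstEntries hid hJset L Finset.univ e a b
    (fun l _ => pow_pos (by exact_mod_cast hDpos) _)
    (fun j _ => Finset.mem_image_of_mem e (Finset.mem_univ j))
    (fun j _ l hl => hb0 j l hl) F hFp
  have hz' : ∀ j : Fin q, ∃ m ∈ F, ((m : ℕ) : ℤ) =
      a (e j) * ((z (e j) : ℕ) : ℤ) + ∑ l ∈ L, b j l * ((z l : ℕ) : ℤ) :=
    fun j => hz j (Finset.mem_univ j)
  choose xm hxF hxv using hz'
  set n : ℕ → ℚ := fun l => (D : ℚ) ^ (l + 1) * ((z l : ℕ) : ℚ) with hn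
  have hQ : ∀ j, ((xm j : ℕ) : ℚ) = n (e j) - ∑ l ∈ L, β l j * n l := by
    intro j
    have h1 : ((xm j : ℕ) : ℚ) = ((a (e j) : ℤ) : ℚ) * ((z (e j) : ℕ) : ℚ) +
        ∑ l ∈ L, ((b j l : ℤ) : ℚ) * ((z l : ℕ) : ℚ) := by
      exact_mod_cast congrArg (Int.cast : ℤ → ℚ) (hxv j)
    rw [h1]
    have h2 : ((a (e j) : ℤ) : ℚ) = (D : ℚ) ^ (e j + 1) := by
      simp only [ha]; push_cast; ring
    have h3 : ∀ l ∈ L, ((b j l : ℤ) : ℚ) * ((z l : ℕ) : ℚ) = - (β l j * n l) := by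
      intro l hl
      rw [hbv l hl j]
      simp only [hn]
      ring
    rw [h2, Finset.sum_congr rfl h3]
    simp only [hn]
    rw [Finset.sum_neg_distrib]
    ring
  refine ⟨xm, hxF, ?_⟩
  have hfun : (fun j => ((xm j : ℕ) : ℚ)) = fun j => n (e j) - ∑ l ∈ L, β l j * n l :=
    funext hQ
  rw [hfun]
  ext i
  simp only [Matrix.mulVec, dotProduct, Pi.zero_apply]
  have hexp : ∀ j : Fin q, A i j * (n (e j) - ∑ l ∈ L, β l j * n l) =
      A i j * n (e j) - ∑ l ∈ L, A i j * (β l j * n l) := by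
    intro j
    rw [mul_sub, Finset.mul_sum]
  rw [Finset.sum_congr rfl (fun j _ => hexp j), Finset.sum_sub_distrib]
  have hT1 : (∑ j, A i j * n (e j)) = ∑ l ∈ L, (∑ j ∈ Finset.univ.filter (fun j => e j = l), A i j) * n l := by
    rw [← Finset.sum_fiberwise_of_maps_to (fun j _ => Finset.mem_image_of_mem e (Finset.mem_univ j))
      (fun j => A i j * n (e j))]
    refine Finset.sum_congr rfl fun l _ => ?_
    rw [Finset.sum_mul]
    refine Finset.sum_congr rfl fun j hj => ?_
    rw [(Finset.mem_filter.1 hj).2]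
  have hT2 : (∑ j, ∑ l ∈ L, A i j * (β l j * n l)) =
      ∑ l ∈ L, (∑ j, β l j * A i j) * n l := by
    rw [Finset.sum_comm]
    refine Finset.sum_congr rfl fun l _ => ?_
    rw [Finset.sum_mul]
    refine Finset.sum_congr rfl fun j _ => ?_
    ring
  rw [hT1, hT2, ← Finset.sum_sub_distrib]
  refine Finset.sum_eq_zero fun l hl => ?_
  have hs := congrFun (hspanEq l hl) i
  rw [Finset.sum_apply] at hs
  have hs2 : (∑ j ∈ Finset.univ.filter (fun j => e j = l), A i j) = ∑ j, β l j * A i j := by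
    rw [hs]
    rw [Finset.sum_apply]
    rfl
  rw [hs2]
  ring
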